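/- Let N be a positive even integer. Then for every z ∈ ℂ with z ≠ 1, P_N(z/(z−1)) · (1−z)^{N/2} = Q_N(z). (This is the Pfaff transformation ₂F₁(−N/2, N/2+1; −N; z/(z−1))(1−z)^{N/2} = ₂F₁(−N/2, −3N/2−1; −N; z) for these terminating hypergeometric polynomials.) -/

import Mathlib

open Polynomial Finset

noncomputable section

/-- The rising Pochhammer symbol `(q)_k = q(q+1)⋯(q+k-1)` over `ℚ`. -/
def poch (q : ℚ) (k : ℕ) : ℚ := (ascPochhammer ℚ k).eval q

/-- Coefficient of `z^k` in `P_N(z) = ₂F₁(-N/2, N/2+1; -N; z)`. -/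
def Pcoef (N k : ℕ) : ℚ :=
  poch (-(N : ℚ) / 2) k * poch ((N : ℚ) / 2 + 1) k /
    (poch (-(N : ℚ)) k * (Nat.factorial k : ℚ))

/-- Coefficient of `z^k` in `Q_N(z) = ₂F₁(-N/2, -3N/2-1; -N; z)`. -/
def Qcoef (N k : ℕ) : ℚ :=
  poch (-(N : ℚ) / 2) k * poch (-(3 * (N : ℚ)) / 2 - 1) k /
    (poch (-(N : ℚ)) k * (Nat.factorial k : ℚ))

/-- The polynomial `P_N(z)`. -/
def Ppoly (N : ℕ) : ℚ[X] := ∑ k ∈ Finset.range (N / 2 + 1), C (Pcoef N k) * X ^ k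

/-- The polynomial `Q_N(z)`. -/
def Qpoly (N : ℕ) : ℚ[X] := ∑ k ∈ Finset.range (N / 2 + 1), C (Qcoef N k) * X ^ k


lemma poch_zero (q : ℚ) : poch q 0 = 1 := by simp [poch]

lemma poch_succ (q : ℚ) (k : ℕ) : poch q (k+1) = poch q k * (q + k) :=
  ascPochhammer_succ_eval k q

lemma poch_succ_left (q : ℚ) (k : ℕ) : poch q (k+1) = q * poch (q+1) k := by
  unfold poch
  rw [ascPochhammer_succ_left, X_mul, eval_mul_X, eval_comp]
  simp [mul_comm]

lemma poch_add (q : ℚ) (a b : ℕ) : poch q (a+b) = poch q a * poch (q+a) b := by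
  unfold poch
  rw [← ascPochhammer_mul, eval_mul, eval_comp]
  simp

lemma poch_neg_nat {a j : ℕ} (h : j ≤ a) :
    poch (-(a:ℚ)) j = (-1)^j * (j.factorial : ℚ) * (a.choose j : ℚ) := by
  unfold poch
  rw [ascPochhammer_eval_neg_eq_descPochhammer, descPochhammer_eval_eq_descFactorial,
    Nat.descFactorial_eq_factorial_mul_choose]
  push_cast
  ring

lemma poch_neg_ne_zero {M k : ℕ} (h : k ≤ M) : poch (-(M:ℚ)) k ≠ 0 := by
  unfold poch
  intro hc
  rw [ascPochhammer_eval_eq_zero_iff] at hc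
  obtain ⟨j, hj, hje⟩ := hc
  rw [neg_neg] at hje
  have : j = M := by exact_mod_cast hje
  omega

lemma vandermonde : ∀ (m : ℕ) (b c : ℚ),
    ∑ k ∈ range (m+1), (-1:ℚ)^k * (m.choose k : ℚ) * poch b k * poch (c+k) (m-k)
      = poch (c-b) m := by
  intro m
  induction m with
  | zero => intro b c; simp [poch_zero]
  | succ m ih =>
    intro b c
    -- RHS rewrite
    have hcast : ∀ j : ℕ, (((j+1:ℕ)):ℚ) = (j:ℚ)+1 := by intro j; push_cast; ring
    have hR : poch (c-b) (m+1)
        = (c-b) * ∑ k ∈ range (m+1), (-1:ℚ)^k * (m.choose k : ℚ) * poch b k * poch (c+1+k) (m-k) := by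
      rw [poch_succ_left]
      congr 1
      · have h1 : c - b + 1 = c + 1 - b := by ring
        rw [h1, ← ih b (c+1)]
    rw [hR, Finset.mul_sum]
    -- split RHS termwise
    have hsplit : ∀ k ∈ range (m+1),
        (c-b) * ((-1:ℚ)^k * (m.choose k : ℚ) * poch b k * poch (c+1+k) (m-k))
        = (-1:ℚ)^k * (m.choose k : ℚ) * poch b k * ((c+k) * poch (c+1+k) (m-k))
          - (-1:ℚ)^k * (m.choose k : ℚ) * (poch b k * (b+k)) * poch (c+1+k) (m-k) := by
      intro k _; ring
    rw [Finset.sum_congr rfl hsplit, Finset.sum_sub_distrib]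
    -- LHS: peel first term
    rw [Finset.sum_range_succ']
    simp only [Nat.choose_succ_succ, Nat.succ_sub_succ, Nat.cast_add, pow_zero,
      Nat.choose_zero_right, Nat.cast_one, one_mul, Nat.sub_zero, add_zero]
    -- now LHS = ∑_j ((-1)^(j+1) * (C(m,j)+C(m,j+1)) * ...) + poch b 0 * poch (c+0) (m+1)
    have hB : (∑ k ∈ range (m+1),
        (-1:ℚ)^k * (m.choose k : ℚ) * poch b k * ((c+k) * poch (c+1+k) (m-k)))
        = (∑ j ∈ range (m+1),
            (-1:ℚ)^(j+1) * (m.choose (j+1) : ℚ) * poch b (j+1) * poch (c+(j+1:ℕ)) (m-j))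
          + poch b 0 * poch (c+(0:ℕ)) (m+1) := by
      have h1 : ∀ k ∈ range (m+1),
          (-1:ℚ)^k * (m.choose k : ℚ) * poch b k * ((c+k) * poch (c+1+k) (m-k))
          = (-1:ℚ)^k * (m.choose k : ℚ) * poch b k * poch (c+k) (m+1-k) := by
        intro k hk
        rw [mem_range] at hk
        have h2 : m + 1 - k = (m - k) + 1 := by omega
        rw [h2, poch_succ_left]
        ring_nf
      rw [Finset.sum_congr rfl h1]
      have h3 : (∑ k ∈ range (m+2),
          (-1:ℚ)^k * (m.choose k : ℚ) * poch b k * poch (c+k) (m+1-k))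
          = (∑ k ∈ range (m+1),
          (-1:ℚ)^k * (m.choose k : ℚ) * poch b k * poch (c+k) (m+1-k)) := by
        rw [Finset.sum_range_succ, Nat.choose_succ_self]
        simp
      rw [← h3, Finset.sum_range_succ']
      simp [Nat.succ_sub_succ]
    have hA : (∑ k ∈ range (m+1),
        (-1:ℚ)^k * (m.choose k : ℚ) * (poch b k * (b+k)) * poch (c+1+k) (m-k))
        = - ∑ j ∈ range (m+1),
            (-1:ℚ)^(j+1) * (m.choose j : ℚ) * poch b (j+1) * poch (c+(j+1:ℕ)) (m-j) := by
      rw [← Finset.sum_neg_distrib]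
      refine Finset.sum_congr rfl fun j hj => ?_
      rw [poch_succ, pow_succ, hcast]
      have : c + ((j:ℚ)+1) = c+1+j := by ring
      rw [this]
      ring
    rw [hB, hA]
    simp only [hcast, Nat.cast_zero, Nat.succ_eq_add_one, add_zero]
    rw [sub_neg_eq_add]
    have hfin : ∀ x ∈ range (m+1),
        (-1:ℚ)^(x+1) * ((m.choose x : ℚ) + (m.choose (x+1) : ℚ)) * poch b (x+1) * poch (c+((x:ℚ)+1)) (m-x)
        = (-1:ℚ)^(x+1) * (m.choose (x+1) : ℚ) * poch b (x+1) * poch (c+((x:ℚ)+1)) (m-x)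
          + (-1:ℚ)^(x+1) * (m.choose x : ℚ) * poch b (x+1) * poch (c+((x:ℚ)+1)) (m-x) := by
      intro x _; ring
    rw [Finset.sum_congr rfl hfin, Finset.sum_add_distrib]
    ring

lemma hsqm : ∀ j:ℕ, (-1:ℚ)^(j*2) = 1 := fun j =>
  Even.neg_one_pow ⟨j, by ring⟩

lemma hsq' : ∀ j:ℕ, ((-1:ℚ)^j)^2 = 1 := fun j => by
  rw [← pow_mul]; exact hsqm j

lemma keyId (n m : ℕ) (hm : m ≤ n) :
    Qcoef (2*n) m = (-1:ℚ)^m * ∑ k ∈ range (m+1),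
      Pcoef (2*n) k * ((n-k).choose (m-k) : ℚ) := by
  have e3 : -(((2*n : ℕ)) : ℚ) = -(2*(n:ℚ)) := by push_cast; ring
  have hDm : poch (-(2*(n:ℚ))) m ≠ 0 := by
    have := poch_neg_ne_zero (M := 2*n) (k := m) (by omega)
    rwa [e3] at this
  have hfacm : ((m.factorial : ℕ) : ℚ) ≠ 0 := by
    exact_mod_cast m.factorial_ne_zero
  have hterm : ∀ k ∈ range (m+1),
      Pcoef (2*n) k * ((n-k).choose (m-k) : ℚ)
      = poch (-(n:ℚ)) m / (poch (-(2*(n:ℚ))) m * (m.factorial : ℚ)) *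
        ((-1:ℚ)^m * ((-1:ℚ)^k * (m.choose k : ℚ) * poch ((n:ℚ)+1) k *
          poch (-(2*(n:ℚ)) + k) (m-k))) := by
    intro k hk
    rw [mem_range] at hk
    have hkm : k ≤ m := by omega
    have e1 : -(((2*n : ℕ)) : ℚ)/2 = -(n:ℚ) := by push_cast; ring
    have e2 : (((2*n : ℕ)) : ℚ)/2 + 1 = (n:ℚ)+1 := by push_cast; ring
    have hDk : poch (-(2*(n:ℚ))) k ≠ 0 := by
      have := poch_neg_ne_zero (M := 2*n) (k := k) (by omega)
      rwa [e3] at this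
    have f1 : poch (-(n:ℚ)) m = poch (-(n:ℚ)) k * poch (-(n:ℚ)+k) (m-k) := by
      rw [← poch_add]; congr 1; omega
    have f3 : poch (-(2*(n:ℚ))) m = poch (-(2*(n:ℚ))) k * poch (-(2*(n:ℚ))+k) (m-k) := by
      rw [← poch_add]; congr 1; omega
    have hE : poch (-(2*(n:ℚ))+k) (m-k) ≠ 0 := by
      intro h0
      rw [f3, h0, mul_zero] at hDm
      exact hDm rfl
    have f2 : ((n-k).choose (m-k) : ℚ)
        = (-1:ℚ)^(m-k) * poch (-(n:ℚ)+k) (m-k) / ((m-k).factorial : ℚ) := by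
      have hcast : -(((n-k : ℕ)) : ℚ) = -(n:ℚ)+k := by
        have : ((n-k : ℕ) : ℚ) = (n:ℚ) - k := by
          push_cast [Nat.cast_sub (by omega : k ≤ n)]; ring
        rw [this]; ring
      have := poch_neg_nat (a := n-k) (j := m-k) (by omega)
      rw [hcast] at this
      rw [this]
      have hfk : (((m-k).factorial : ℕ) : ℚ) ≠ 0 := by
        exact_mod_cast (m-k).factorial_ne_zero
      field_simp
      ring_nf
      first
      | rw [hsq', mul_one]
      | rw [hsqm, mul_one]
    have f4 : ((m.factorial : ℕ) : ℚ)
        = (m.choose k : ℚ) * (k.factorial : ℚ) * ((m-k).factorial : ℚ) := by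
      exact_mod_cast congrArg (Nat.cast : ℕ → ℚ)
        (Nat.choose_mul_factorial_mul_factorial hkm).symm
    have hsgn : (-1:ℚ)^k * (-1:ℚ)^(m-k) = (-1:ℚ)^m := by
      rw [← pow_add]; congr 1; omega
    have hck : (m.choose k : ℚ) ≠ 0 := by
      have h := Nat.choose_pos hkm
      exact_mod_cast h.ne'
    have hfk : (((m-k).factorial : ℕ) : ℚ) ≠ 0 := by
      exact_mod_cast (m-k).factorial_ne_zero
    have hfkk : ((k.factorial : ℕ) : ℚ) ≠ 0 := by
      exact_mod_cast k.factorial_ne_zero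
    unfold Pcoef
    rw [e1, e2, e3, f2, f1, f3, f4, ← hsgn]
    field_simp
    ring_nf
    first
      | rw [hsq', mul_one]
      | rw [hsqm, mul_one]
    have hE' : poch (-((n:ℚ) * 2) + k) (m - k) ≠ 0 := by convert hE using 3; ring
    rw [mul_assoc _ (poch (-((n:ℚ) * 2) + k) (m - k)), mul_inv_cancel₀ hE', mul_one]
  rw [Finset.sum_congr rfl hterm, ← Finset.mul_sum, ← Finset.mul_sum,
    vandermonde m ((n:ℚ)+1) (-(2*(n:ℚ)))]
  unfold Qcoef
  have e1 : -(((2*n : ℕ)) : ℚ)/2 = -(n:ℚ) := by push_cast; ring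
  have e4 : -(3 * ((2*n:ℕ) : ℚ))/2 - 1 = -(2*(n:ℚ)) - ((n:ℚ)+1) := by push_cast; ring
  rw [e1, e3, e4]
  have h1 : (-1:ℚ)^m * (-1:ℚ)^m = 1 := by
    rw [← pow_add, ← two_mul, pow_mul]; norm_num
  have h2 : ∀ A B : ℚ, (-1:ℚ)^m * (A * ((-1:ℚ)^m * B)) = A * B := by
    intro A B
    calc (-1:ℚ)^m * (A * ((-1:ℚ)^m * B)) = ((-1:ℚ)^m * (-1:ℚ)^m) * (A*B) := by ring
    _ = A*B := by rw [h1, one_mul]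
  rw [h2]
  ring

theorem stmt15 (N : ℕ) (hN : 0 < N) (heven : Even N) (z : ℂ) (hz : z ≠ 1) :
    Polynomial.aeval (z / (z - 1)) (Ppoly N) * (1 - z) ^ (N / 2) =
      Polynomial.aeval z (Qpoly N) := by
  obtain ⟨n, hn2⟩ := heven
  have hN2 : N = 2 * n := by omega
  subst hN2
  have hdiv : 2 * n / 2 = n := by omega
  have hz1 : z - 1 ≠ 0 := sub_ne_zero.mpr hz
  set F : ℕ → ℕ → ℂ := fun k j =>
    (algebraMap ℚ ℂ) (Pcoef (2*n) k) *
      ((-1:ℂ)^n * ((-1:ℂ)^(n-k-j) * (((n-k).choose j : ℕ) : ℂ) * z^(k+j))) with hF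
  rw [Ppoly, Qpoly, hdiv]
  simp only [map_sum, map_mul, aeval_C, aeval_X_pow]
  rw [Finset.sum_mul]
  have stepA : ∀ k ∈ range (n+1),
      (algebraMap ℚ ℂ) (Pcoef (2*n) k) * (z/(z-1))^k * (1-z)^n
      = ∑ j ∈ range (n+1-k), F k j := by
    intro k hk
    rw [mem_range] at hk
    have hkn : k ≤ n := by omega
    have hA : (z/(z-1))^k * (1-z)^n = (-1:ℂ)^n * (z^k * (z-1)^(n-k)) := by
      rw [div_pow, show (1-z : ℂ) = -(z-1) by ring, neg_pow,
        show (z-1)^n = (z-1)^k * (z-1)^(n-k) by rw [← pow_add]; congr 1; omega]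
      field_simp
    have hB : (z-1)^(n-k) = ∑ j ∈ range (n-k+1),
        z^j * (-1:ℂ)^(n-k-j) * (((n-k).choose j : ℕ) : ℂ) := by
      rw [show (z-1 : ℂ) = z + (-1) by ring, add_pow]
    rw [mul_assoc, hA, hB, show n+1-k = (n-k)+1 by omega]
    simp only [Finset.mul_sum]
    refine Finset.sum_congr rfl fun j hj => ?_
    rw [hF]
    simp only []
    rw [pow_add]
    ring
  rw [Finset.sum_congr rfl stepA, ← Finset.sum_range_diag_flip (n+1) F]
  refine Finset.sum_congr rfl fun m hm => ?_
  rw [mem_range] at hm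
  have hmn : m ≤ n := by omega
  rw [keyId n m hmn]
  have hsgn : (-1:ℂ)^n * (-1:ℂ)^(n-m) = (-1:ℂ)^m := by
    rw [← pow_add, show n+(n-m) = m + 2*(n-m) by omega, pow_add, pow_mul]
    norm_num
  have hterm : ∀ k ∈ range (m+1), F k (m-k)
      = (-1:ℂ)^m * ((algebraMap ℚ ℂ) (Pcoef (2*n) k) * (((n-k).choose (m-k) : ℕ) : ℂ)) * z^m := by
    intro k hk
    rw [mem_range] at hk
    have hkm : k ≤ m := by omega
    rw [hF]
    simp only []
    rw [show k+(m-k) = m by omega, show n-k-(m-k) = n-m by omega, ← hsgn]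
    ring
  rw [Finset.sum_congr rfl hterm]
  rw [map_mul, map_sum]
  simp only [map_mul, map_pow, map_neg, map_one, map_natCast]
  rw [← Finset.sum_mul, ← Finset.mul_sum]
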